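/- Let f : I → I be a C² unimodal map with quadratic minimum at c. If f²(c) < c, then the even subsequence (f^{2k}(c))_{k≥0} is nonincreasing and converges to a point p ∈ [f(c), c] with f²(p) = p and 0 ≤ (f²)'(p) ≤ 1; consequently the forward orbit of c converges to a periodic orbit of f of period 1 or 2 which is attracting or parabolic. -/

import Mathlib

open Set Filter

/-- A `C²` unimodal map `f : [a,b] → [a,b]` with quadratic minimum at an interior point
`c`: `f` is `C²`, `c` is the unique critical point (`f'(c) = 0`, `f' ≠ 0` elsewhere),
`f''(c) > 0`, and `f` is strictly decreasing on `[a,c]` and strictly increasing on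
`[c,b]`. -/
structure UnimodalMin (f : ℝ → ℝ) (a b c : ℝ) : Prop where
  hab : a < b
  hc : c ∈ Ioo a b
  maps : MapsTo f (Icc a b) (Icc a b)
  smooth : ContDiffOn ℝ 2 f (Icc a b)
  crit : derivWithin f (Icc a b) c = 0
  noncrit : ∀ x ∈ Icc a b, x ≠ c → derivWithin f (Icc a b) x ≠ 0
  second : 0 < iteratedDerivWithin 2 f (Icc a b) c
  anti : StrictAntiOn f (Icc a c)
  mono : StrictMonoOn f (Icc c b)

/-- Lemma 6.1 ii) (sink combin): if `f²(c) < c`, then the even orbit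
`(f^{2k}(c))_{k ≥ 0}` is nonincreasing and converges to a point `p ∈ [f(c), c]` with
`f²(p) = p` and `0 ≤ (f²)'(p) ≤ 1`; consequently the orbit of `c` converges to an
attracting or parabolic periodic orbit of period `1` or `2`. -/
theorem stmt8 (f : ℝ → ℝ) (a b c : ℝ) (h : UnimodalMin f a b c) (hfc : f^[2] c < c) :
    ∃ p ∈ Icc (f c) c,
      (∀ k : ℕ, f^[2 * (k + 1)] c ≤ f^[2 * k] c) ∧
      Tendsto (fun k => f^[2 * k] c) atTop (nhds p) ∧
      f (f p) = p ∧
      0 ≤ derivWithin (f ∘ f) (Icc a b) p ∧ derivWithin (f ∘ f) (Icc a b) p ≤ 1 ∧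
      Tendsto (fun k => f^[2 * k + 1] c) atTop (nhds (f p)) := by
  --

  have hfc2 : f (f c) < c := by simpa [Function.iterate_succ_apply'] using hfc
  have hcab : c ∈ Icc a b := ⟨h.hc.1.le, h.hc.2.le⟩
  have hfcab : f c ∈ Icc a b := h.maps hcab
  have hcac : c ∈ Icc a c := ⟨h.hc.1.le, le_rfl⟩
  have hantile : AntitoneOn f (Icc a c) := h.anti.antitoneOn
  have hmin : ∀ y ∈ Icc a c, f c ≤ f y := fun y hy => hantile hy hcac hy.2
  -- f c < c
  have hfclt : f c < c := by
    by_contra hcon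
    push_neg at hcon
    rcases eq_or_lt_of_le hcon with h' | h'
    · have h2 : f (f c) = c := by rw [← h', ← h']
      rw [h2] at hfc2; exact lt_irrefl c hfc2
    · have := h.mono ⟨le_rfl, h.hc.2.le⟩ ⟨hcon, hfcab.2⟩ h'
      exact absurd hfc2 (not_lt.2 (hcon.trans this.le))
  have hfcac : f c ∈ Icc a c := ⟨hfcab.1, hfclt.le⟩
  have hfc2le : f c ≤ f (f c) := hmin (f c) hfcac
  -- the invariant interval J = [f c, c]
  have hJsub : Icc (f c) c ⊆ Icc a c := Icc_subset_Icc hfcab.1 le_rfl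
  have hJab : Icc (f c) c ⊆ Icc a b := hJsub.trans (Icc_subset_Icc le_rfl h.hc.2.le)
  -- f h.maps J into [f c, f (f c)] ⊆ J ⊆ [a, c]
  have hfJ : ∀ x ∈ Icc (f c) c, f x ∈ Icc (f c) (f (f c)) := fun x hx =>
    ⟨hmin x (hJsub hx), hantile hfcac (hJsub hx) hx.1⟩
  have hsubJ : Icc (f c) (f (f c)) ⊆ Icc (f c) c := Icc_subset_Icc le_rfl hfc2.le
  have hfJac : ∀ x ∈ Icc (f c) c, f x ∈ Icc a c := fun x hx => hJsub (hsubJ (hfJ x hx))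
  -- g = f ∘ f is strictly monotone on J and h.maps J to J
  have hgmono : ∀ x ∈ Icc (f c) c, ∀ y ∈ Icc (f c) c, x < y → f (f x) < f (f y) :=
    fun x hx y hy hxy => h.anti (hfJac y hy) (hfJac x hx) (h.anti (hJsub hx) (hJsub hy) hxy)
  have hgle : ∀ x ∈ Icc (f c) c, ∀ y ∈ Icc (f c) c, x ≤ y → f (f x) ≤ f (f y) := by
    intro x hx y hy hxy
    rcases hxy.eq_or_lt with rfl | h'
    · exact le_rfl
    · exact (hgmono x hx y hy h').le
  have hgJ : ∀ x ∈ Icc (f c) c, f (f x) ∈ Icc (f c) c := fun x hx =>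
    hsubJ (hfJ (f x) (hsubJ (hfJ x hx)))
  -- the orbit sequence
  set x : ℕ → ℝ := fun k => f^[2 * k] c with hxdef
  have hx0 : x 0 = c := by simp [hxdef]
  have hxsucc : ∀ k, x (k + 1) = f (f (x k)) := by
    intro k
    show f^[2 * (k + 1)] c = f (f (f^[2 * k] c))
    rw [show 2 * (k + 1) = 2 * k + 1 + 1 by ring, Function.iterate_succ_apply',
      Function.iterate_succ_apply']
  have hx1 : x 1 = f (f c) := by rw [hxsucc 0, hx0]
  have hxJ : ∀ k, x k ∈ Icc (f c) c := by
    intro k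
    induction k with
    | zero => rw [hx0]; exact ⟨hfclt.le, le_rfl⟩
    | succ n ih => rw [hxsucc]; exact hgJ _ ih
  have hxdec : ∀ k, x (k + 1) ≤ x k := by
    intro k
    induction k with
    | zero => rw [hx1, hx0]; exact hfc2.le
    | succ n ih =>
      have h3 := hgle (x (n+1)) (hxJ (n+1)) (x n) (hxJ n) ih
      rw [← hxsucc n, ← hxsucc (n+1)] at h3
      exact h3
  have hanti : Antitone x := antitone_nat_of_succ_le hxdec
  have hbdd : BddBelow (range x) := ⟨f c, by rintro y ⟨k, rfl⟩; exact (hxJ k).1⟩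
  set p : ℝ := ⨅ k, x k with hpdef
  have htend : Tendsto x atTop (nhds p) := tendsto_atTop_ciInf hanti hbdd
  have hpx : ∀ k, p ≤ x k := fun k => ciInf_le hbdd k
  have hfcp : f c ≤ p := le_ciInf fun k => (hxJ k).1
  have hpc : p ≤ c := le_of_le_of_eq (hpx 0) hx0
  have hpJ : p ∈ Icc (f c) c := ⟨hfcp, hpc⟩
  have hpab : p ∈ Icc a b := hJab hpJ
  -- continuity and fixed point
  have hfcont : ContinuousOn f (Icc a b) := h.smooth.continuousOn
  have hgcont : ContinuousOn (f ∘ f) (Icc a b) := hfcont.comp hfcont h.maps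
  have htendW : Tendsto x atTop (nhdsWithin p (Icc a b)) :=
    tendsto_nhdsWithin_of_tendsto_nhds_of_eventually_within x htend
      (Eventually.of_forall fun k => hJab (hxJ k))
  have hgp : f (f p) = p := by
    have h1 : Tendsto (fun k => f (f (x k))) atTop (nhds (f (f p))) :=
      (hgcont p hpab).tendsto.comp htendW
    have h2 : Tendsto (fun k => x (k + 1)) atTop (nhds p) :=
      htend.comp (tendsto_add_atTop_nat 1)
    exact tendsto_nhds_unique (h1.congr fun k => (hxsucc k).symm) h2
  -- the orbit stays strictly above p
  have hxgt : ∀ k, p < x k := by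
    intro k
    induction k with
    | zero => exact lt_of_le_of_lt (le_of_le_of_eq (hpx 1) hx1) (hx0 ▸ hfc2)
    | succ n ih =>
      rw [hxsucc]
      calc p = f (f p) := hgp.symm
        _ < f (f (x n)) := hgmono p hpJ (x n) (hxJ n) ih
  -- derivative of f ∘ f at p
  have hdiff : DifferentiableOn ℝ f (Icc a b) := h.smooth.differentiableOn two_ne_zero
  have hfpab : f p ∈ Icc a b := h.maps hpab
  have hD : HasDerivWithinAt (f ∘ f)
      (derivWithin f (Icc a b) (f p) * derivWithin f (Icc a b) p) (Icc a b) p :=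
    ((hdiff (f p) hfpab).hasDerivWithinAt).comp p ((hdiff p hpab).hasDerivWithinAt) h.maps
  have hDval : derivWithin (f ∘ f) (Icc a b) p =
      derivWithin f (Icc a b) (f p) * derivWithin f (Icc a b) p :=
    hD.derivWithin ((uniqueDiffOn_Icc h.hab) p hpab)
  rw [hasDerivWithinAt_iff_tendsto_slope] at hD
  have htendW' : Tendsto x atTop (nhdsWithin p (Icc a b \ {p})) :=
    tendsto_nhdsWithin_of_tendsto_nhds_of_eventually_within x htend
      (Eventually.of_forall fun k => ⟨hJab (hxJ k), (hxgt k).ne'⟩)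
  have hslopes : Tendsto (fun k => slope (f ∘ f) p (x k)) atTop
      (nhds (derivWithin f (Icc a b) (f p) * derivWithin f (Icc a b) p)) :=
    hD.comp htendW'
  have hslope_eq : ∀ k, slope (f ∘ f) p (x k) = (x (k + 1) - p) / (x k - p) := by
    intro k
    rw [slope_def_field]
    show (f (f (x k)) - f (f p)) / (x k - p) = _
    rw [hgp, hxsucc]
  have hs0 : ∀ k, 0 ≤ slope (f ∘ f) p (x k) := by
    intro k
    rw [hslope_eq]
    exact div_nonneg (sub_nonneg.2 (hpx (k+1))) (sub_nonneg.2 (hpx k))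
  have hs1 : ∀ k, slope (f ∘ f) p (x k) ≤ 1 := by
    intro k
    rw [hslope_eq]
    exact div_le_one_of_le₀ (by linarith [hxdec k]) (sub_nonneg.2 (hpx k))
  have hD0 : 0 ≤ derivWithin (f ∘ f) (Icc a b) p := by
    rw [hDval]
    exact ge_of_tendsto hslopes (Eventually.of_forall hs0)
  have hD1 : derivWithin (f ∘ f) (Icc a b) p ≤ 1 := by
    rw [hDval]
    exact le_of_tendsto hslopes (Eventually.of_forall hs1)
  -- odd orbit
  have hodd : Tendsto (fun k => f^[2 * k + 1] c) atTop (nhds (f p)) := by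
    have : Tendsto (fun k => f (x k)) atTop (nhds (f p)) :=
      (hfcont p hpab).tendsto.comp htendW
    exact this.congr fun k => (Function.iterate_succ_apply' f (2*k) c).symm
  exact ⟨p, hpJ, fun k => hxdec k, htend, hgp, hD0, hD1, hodd⟩
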